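/- Derivative conditions for interior optimal covariate choice (Appendix computation for differentiation with costless covariates): Let k, n, β̄², σ² be real numbers with k ≥ 1, n > k + 1, β̄² > 0 and σ² > 0. Define U : (−∞, n−1) → ℝ by U(d) = −σ² − β̄²·(k − d) − (1/2)·(β̄²·(k − d) + σ²)·d/(n − d − 1). Then U′(0) = −(β̄²·(k − 2n + 2) + σ²)/(2n − 2) and U′(k) = (β̄²·(k² − 3k(n−1) + 2(n−1)²) − (n−1)·σ²)/(2·(n − k − 1)²). Consequently, U′(0) > 0 and U′(k) < 0 if and only if k²/(n−1) − 3k + 2n − 2 < σ²/β̄² < −k + 2n − 2. -/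

import Mathlib

private lemma aux_hasDerivAt (k n b2 σ2 d₀ : ℝ) (hg : n - d₀ - 1 ≠ 0) :
    HasDerivAt (fun d => -σ2 - b2 * (k - d) - (1 / 2) * (b2 * (k - d) + σ2) * d / (n - d - 1))
      (b2 - ((b2 * k - 2 * b2 * d₀ + σ2) * (n - d₀ - 1) + (b2 * (k - d₀) + σ2) * d₀)
        / (2 * (n - d₀ - 1) ^ 2)) d₀ := by
  have hu : HasDerivAt (fun d => b2 * (k - d) + σ2) (b2 * (-1)) d₀ :=
    (((hasDerivAt_id d₀).const_sub k).const_mul b2).add_const σ2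
  have hf : HasDerivAt (fun d => (1 / 2) * (b2 * (k - d) + σ2) * d)
      (((1 / 2) * (b2 * (-1))) * d₀ + ((1 / 2) * (b2 * (k - d₀) + σ2)) * 1) d₀ :=
    (hu.const_mul (1 / 2)).mul (hasDerivAt_id d₀)
  have hgd : HasDerivAt (fun d => n - d - 1) (-1) d₀ :=
    ((hasDerivAt_id d₀).const_sub n).sub_const 1
  have hdiv := hf.div hgd hg
  have hb : HasDerivAt (fun d => -σ2 - b2 * (k - d)) (0 - b2 * (-1)) d₀ :=
    (hasDerivAt_const d₀ (-σ2)).sub (((hasDerivAt_id d₀).const_sub k).const_mul b2)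
  have hmain := hb.sub hdiv
  convert hmain using 1
  · rfl
  · rfl
  · rfl
  field_simp
  ring

theorem interior_covariate_choice_derivatives
    (k n b2 σ2 : ℝ) (hk : 1 ≤ k) (hn : k + 1 < n) (hb2 : 0 < b2) (hσ2 : 0 < σ2)
    (U : ℝ → ℝ)
    (hU : ∀ d : ℝ, d < n - 1 →
      U d = -σ2 - b2 * (k - d) - (1 / 2) * (b2 * (k - d) + σ2) * d / (n - d - 1)) :
    deriv U 0 = -(b2 * (k - 2 * n + 2) + σ2) / (2 * n - 2)
    ∧ deriv U k
        = (b2 * (k ^ 2 - 3 * k * (n - 1) + 2 * (n - 1) ^ 2) - (n - 1) * σ2)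
          / (2 * (n - k - 1) ^ 2)
    ∧ ((0 < deriv U 0 ∧ deriv U k < 0)
        ↔ (k ^ 2 / (n - 1) - 3 * k + 2 * n - 2 < σ2 / b2 ∧ σ2 / b2 < -k + 2 * n - 2)) := by
  have hn1 : (0:ℝ) < n - 1 := by linarith
  have hnk : (0:ℝ) < n - k - 1 := by linarith
  set V : ℝ → ℝ := fun d => -σ2 - b2 * (k - d) - (1 / 2) * (b2 * (k - d) + σ2) * d / (n - d - 1)
    with hV
  have hderiv : ∀ d₀ : ℝ, d₀ < n - 1 → deriv U d₀ =
      b2 - ((b2 * k - 2 * b2 * d₀ + σ2) * (n - d₀ - 1) + (b2 * (k - d₀) + σ2) * d₀)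
        / (2 * (n - d₀ - 1) ^ 2) := by
    intro d₀ hd
    have hev : U =ᶠ[nhds d₀] V :=
      Filter.eventually_of_mem (Iio_mem_nhds hd) (fun x hx => hU x hx)
    rw [hev.deriv_eq]
    exact (aux_hasDerivAt k n b2 σ2 d₀ (by intro h; rw [sub_eq_zero] at h; nlinarith)).deriv
  have h0 : deriv U 0 = -(b2 * (k - 2 * n + 2) + σ2) / (2 * n - 2) := by
    rw [hderiv 0 (by linarith)]
    simp only [sub_zero, mul_zero, add_zero]
    have h1 : n - 1 ≠ 0 := ne_of_gt hn1
    have h2 : (2:ℝ) * n - 2 ≠ 0 := by intro h; apply h1; linarith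
    field_simp
    ring
  have hkd : deriv U k = (b2 * (k ^ 2 - 3 * k * (n - 1) + 2 * (n - 1) ^ 2) - (n - 1) * σ2)
      / (2 * (n - k - 1) ^ 2) := by
    rw [hderiv k (by linarith)]
    have h1 : n - k - 1 ≠ 0 := ne_of_gt hnk
    field_simp
    ring
  refine ⟨h0, hkd, ?_⟩
  rw [h0, hkd]
  have e1 : (0 < -(b2 * (k - 2 * n + 2) + σ2) / (2 * n - 2)) ↔ σ2 / b2 < -k + 2 * n - 2 := by
    rw [div_lt_iff₀ hb2, lt_div_iff₀ (by linarith : (0:ℝ) < 2 * n - 2)]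
    constructor <;> intro h <;> nlinarith
  have e2 : ((b2 * (k ^ 2 - 3 * k * (n - 1) + 2 * (n - 1) ^ 2) - (n - 1) * σ2)
      / (2 * (n - k - 1) ^ 2) < 0) ↔ (k ^ 2 / (n - 1) - 3 * k + 2 * n - 2 < σ2 / b2) := by
    have hrw : k ^ 2 / (n - 1) - 3 * k + 2 * n - 2
        = (k ^ 2 - 3 * k * (n - 1) + 2 * (n - 1) ^ 2) / (n - 1) := by
      field_simp
      ring
    rw [hrw, div_lt_div_iff₀ hn1 hb2,
      div_lt_iff₀ (by positivity : (0:ℝ) < 2 * (n - k - 1) ^ 2)]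
    constructor <;> intro h <;> nlinarith
  constructor
  · rintro ⟨h1, h2⟩; exact ⟨e2.mp h2, e1.mp h1⟩
  · rintro ⟨h1, h2⟩; exact ⟨e1.mpr h2, e2.mpr h1⟩
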